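/- Let ρ be a finite positive Borel measure on the unit circle 𝕋, α ∈ ℝ, u(z) = iα + ∫_𝕋 (ζ+z)/(ζ−z) dρ(ζ) for z ∈ 𝔻, t > 1, Φ_t(z) = z·exp((t−1)u(z)), and Ω_t = {z ∈ 𝔻 : |Φ_t(z)| < 1}. Then for every z ∈ Ω_t with z ≠ 0 one has ∫_𝕋 dρ(ζ)/|ζ − z|² ≤ (log|z|) / ((|z|² − 1)(t−1)). -/

import Mathlib

open MeasureTheory Filter

/-- u(z) = iα + ∫_𝕋 (ζ+z)/(ζ−z) dρ(ζ). -/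
noncomputable def uT (ρ : Measure ℂ) (α : ℝ) (z : ℂ) : ℂ :=
  Complex.I * (α : ℂ) + ∫ ζ : ℂ, (ζ + z) / (ζ - z) ∂ρ

/-- Φ_t(z) = z·exp((t−1)·u(z)). -/
noncomputable def PhiT (ρ : Measure ℂ) (α t : ℝ) (z : ℂ) : ℂ :=
  z * Complex.exp (((t : ℂ) - 1) * uT ρ α z)

theorem stmt18 (ρ : Measure ℂ) [IsFiniteMeasure ρ]
    (hρ : ρ {z : ℂ | ‖z‖ = 1}ᶜ = 0)
    (α t : ℝ) (ht : 1 < t)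
    (z : ℂ) (hz : ‖z‖ < 1) (hΦ : ‖PhiT ρ α t z‖ < 1)
    (hz0 : z ≠ 0) :
    (∫ ζ : ℂ, 1 / ‖ζ - z‖ ^ 2 ∂ρ) ≤
      Real.log (‖z‖) / ((‖z‖ ^ 2 - 1) * (t - 1)) := by
  set r := ‖z‖ with hrdef
  have hr0 : 0 < r := norm_pos_iff.mpr hz0
  have hr1 : r < 1 := hz
  -- a.e. ζ on the unit circle
  have hae : ∀ᵐ ζ ∂ρ, ‖ζ‖ = 1 := by
    rw [ae_iff]; exact hρ
  -- integrability of the kernel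
  have hmeas : Measurable fun ζ : ℂ => (ζ + z) / (ζ - z) := by
    exact (measurable_id.add_const z).div (measurable_id.sub_const z)
  have hbound : ∀ᵐ ζ ∂ρ, ‖(ζ + z) / (ζ - z)‖ ≤ (1 + r) / (1 - r) := by
    filter_upwards [hae] with ζ hζ
    have h1 : ‖ζ + z‖ ≤ 1 + r := by
      calc ‖ζ + z‖ ≤ ‖ζ‖ + ‖z‖ := norm_add_le _ _
        _ = 1 + r := by rw [hζ]
    have h2 : 1 - r ≤ ‖ζ - z‖ := by
      have h := norm_sub_norm_le ζ z
      rw [hζ] at h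
      linarith
    have h3 : (0:ℝ) < 1 - r := by linarith
    rw [norm_div]
    exact div_le_div₀ (by linarith) h1 (by linarith) h2
  have hint : Integrable (fun ζ : ℂ => (ζ + z) / (ζ - z)) ρ :=
    (integrable_const ((1 + r) / (1 - r))).mono' hmeas.aestronglyMeasurable hbound
  -- strict inequality from hΦ
  have hs : (t - 1) * (uT ρ α z).re < -Real.log r := by
    have habs : ‖PhiT ρ α t z‖ =
        r * Real.exp ((t - 1) * (uT ρ α z).re) := by
      rw [PhiT, norm_mul, Complex.norm_exp]
      congr 2
      have : ((t : ℂ) - 1) = ((t - 1 : ℝ) : ℂ) := by push_cast; ring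
      rw [this, Complex.re_ofReal_mul]
    rw [habs] at hΦ
    have hexp : Real.exp ((t - 1) * (uT ρ α z).re) < 1 / r := by
      rw [lt_div_iff₀ hr0, mul_comm]; exact hΦ
    have := Real.log_lt_log (Real.exp_pos _) hexp
    rwa [Real.log_exp, one_div, Real.log_inv] at this
  -- compute (uT ρ α z).re
  have hre : (uT ρ α z).re = ∫ ζ : ℂ, ((ζ + z) / (ζ - z)).re ∂ρ := by
    rw [uT, Complex.add_re]
    have h1 : (Complex.I * (α : ℂ)).re = 0 := by simp
    rw [h1, zero_add]
    exact (integral_re hint).symm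
  -- pointwise real part
  have hptw : ∀ᵐ ζ ∂ρ, ((ζ + z) / (ζ - z)).re =
      (1 - r ^ 2) * (1 / ‖ζ - z‖ ^ 2) := by
    filter_upwards [hae] with ζ hζ
    have hns : Complex.normSq ζ = 1 := by
      rw [← Complex.sq_norm, hζ]; norm_num
    rw [Complex.div_re]
    have hnum : (ζ + z).re * (ζ - z).re + (ζ + z).im * (ζ - z).im = 1 - r ^ 2 := by
      have h2 : Complex.normSq z = r ^ 2 := by rw [← Complex.sq_norm]
      simp only [Complex.add_re, Complex.sub_re, Complex.add_im, Complex.sub_im]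
      rw [Complex.normSq_apply] at hns h2
      nlinarith [hns, h2]
    rw [← add_div, hnum, ← Complex.sq_norm]
    ring
  have hre2 : (uT ρ α z).re =
      (1 - r ^ 2) * ∫ ζ : ℂ, 1 / ‖ζ - z‖ ^ 2 ∂ρ := by
    rw [hre, integral_congr_ae hptw, MeasureTheory.integral_const_mul]
  set I := ∫ ζ : ℂ, 1 / ‖ζ - z‖ ^ 2 ∂ρ with hI
  have key : (t - 1) * ((1 - r ^ 2) * I) < -Real.log r := by
    rw [← hre2]; exact hs
  have hD : (r ^ 2 - 1) * (t - 1) < 0 := by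
    have h1 : r ^ 2 - 1 < 0 := by nlinarith
    exact mul_neg_of_neg_of_pos h1 (by linarith)
  rw [le_div_iff_of_neg hD]
  nlinarith [key]
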